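/- Gauss's Lemma (floor-sum form): for distinct odd primes p and q, the Legendre symbol (q/p) equals (-1)^M where M = sum over a from 1 to (p-1)/2 of floor(2*q*a/p). -/

import Mathlib

private lemma div_two_term (p q x : ℕ) (hp0 : 0 < p) (hodd : p % 2 = 1) :
    (2 * q * x) / p = 2 * ((q * x) / p) + (if p / 2 < (q * x) % p then 1 else 0) := by
  have h1 : 2 * q * x = 2 * ((q * x) % p) + (2 * ((q * x) / p)) * p := by
    conv_lhs => rw [mul_assoc, ← Nat.div_add_mod (q * x) p]
    ring
  rw [h1, Nat.add_mul_div_right _ _ hp0]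
  have hr : (q * x) % p < p := Nat.mod_lt _ hp0
  split_ifs with h
  · have : (2 * ((q * x) % p)) / p = 1 := by
      apply Nat.div_eq_of_lt_le <;> omega
    omega
  · have : (2 * ((q * x) % p)) / p = 0 := Nat.div_eq_of_lt (by omega)
    omega

theorem stmt_3 (p q : ℕ) [Fact p.Prime] (hq : q.Prime) (hp2 : p ≠ 2) (hq2 : q ≠ 2)
    (hpq : p ≠ q) :
    legendreSym p q =
      (((-1 : ℤˣ) ^ (∑ a ∈ Finset.Icc 1 ((p - 1) / 2),
        ⌊(2 * (q : ℚ) * (a : ℚ)) / (p : ℚ)⌋) : ℤˣ) : ℤ) := by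
  have hp : p.Prime := Fact.out
  have hodd : p % 2 = 1 := Nat.odd_iff.mp (hp.odd_of_ne_two hp2)
  have hq0 : ((q : ℤ) : ZMod p) ≠ 0 := by
    rw [Int.cast_natCast, Ne, ZMod.natCast_eq_zero_iff]
    rw [Nat.prime_dvd_prime_iff_eq hp hq]
    exact hpq
  rw [ZMod.gauss_lemma hp2 hq0]
  have hIcc : Finset.Icc 1 ((p - 1) / 2) = Finset.Ico 1 (p / 2).succ := by
    rw [Nat.succ_eq_add_one, Finset.Ico_add_one_right_eq_Icc]
    congr 1
    omega
  set N : ℕ := ∑ x ∈ Finset.Ico 1 (p / 2).succ, (2 * q * x) / p with hN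
  have hM : (∑ a ∈ Finset.Icc 1 ((p - 1) / 2),
      ⌊(2 * (q : ℚ) * (a : ℚ)) / (p : ℚ)⌋) = (N : ℤ) := by
    rw [hIcc, hN, Nat.cast_sum]
    refine Finset.sum_congr rfl fun a _ => ?_
    have h2 : (2 * (q : ℚ) * (a : ℚ)) = ((2 * q * a : ℕ) : ℚ) := by push_cast; ring
    rw [h2, Rat.floor_natCast_div_natCast]
    exact (Int.natCast_ediv _ _).symm
  rw [hM, zpow_natCast, Units.val_pow_eq_pow_val, Units.val_neg, Units.val_one,
    neg_one_pow_eq_pow_mod_two, neg_one_pow_eq_pow_mod_two (n := N)]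
  congr 1
  rw [Finset.card_filter, hN]
  have hterm : ∀ x ∈ Finset.Ico 1 (p / 2).succ,
      (2 * q * x) / p = 2 * ((q * x) / p) +
        (if p / 2 < (((q : ℤ) : ZMod p) * ((x : ℕ) : ZMod p)).val then 1 else 0) := by
    intro x _
    have hv : ((q : ℤ) : ZMod p) * ((x : ℕ) : ZMod p) = ((q * x : ℕ) : ZMod p) := by
      push_cast; ring
    rw [hv, ZMod.val_natCast]
    exact div_two_term p q x hp.pos hodd
  rw [Finset.sum_congr rfl hterm, Finset.sum_add_distrib, ← Finset.mul_sum]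
  omega
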